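/- The Markov chain on bosonic multiline queues defined by forward ringing paths satisfies the global balance condition with unnormalized stationary measure Wt(D) = x^D: for every D, Wt(D) · Σ_{j=1}^{n} rate(D, F̃_j(D)) = Σ_{j=1}^{n} Wt(R̃_j(D)) · rate(R̃_j(D), D), where rate(D, F̃_j(D)) = 1 if column j of D is empty and x_j^{−1} otherwise, and rate of the reverse transition R̃_j is 1 if column j is empty and x_{j+1}^{−1} otherwise. -/

import Mathlib

/-- Forward ringing path on a bosonic multiline queue (rows indexed from `0`):
`bfPath D i j = 𝔞_{j+1}`, with `𝔞_1 = i` and `𝔞_{j+1} = 𝔞_j` if `𝔞_j ∉ D_j`,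
otherwise `𝔞_j + 1` (mod `n`). -/
def bfPath {n : ℕ} (D : ℕ → Multiset (ZMod n)) (i : ZMod n) : ℕ → ZMod n
  | 0 => i
  | j + 1 => if bfPath D i j ∈ D j then bfPath D i j + 1 else bfPath D i j

/-- Forward ringing transition `F̃(D, i) = (D', 𝔞_{L+1} − 1)`: in each row `j` with
`𝔞_j ∈ D_j`, one particle hops from site `𝔞_j` to site `𝔞_j + 1`. -/
def bF {n : ℕ} (L : ℕ) (D : ℕ → Multiset (ZMod n)) (i : ZMod n) :
    (ℕ → Multiset (ZMod n)) × ZMod n :=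
  (fun j =>
    if j < L then
      (if bfPath D i j ∈ D j then (bfPath D i j + 1) ::ₘ (D j).erase (bfPath D i j) else D j)
    else D j,
   bfPath D i L - 1)

/-- Reverse ringing path: `brPath L D i t = 𝔟_{L−t}`, with `𝔟_L = i` and
`𝔟_j = 𝔟_{j+1}` if `𝔟_{j+1} + 1 ∉ D_{j+1}`, else `𝔟_{j+1} − 1`
(rows `1, …, L` of the paper are indexed `0, …, L-1` here). -/
def brPath {n : ℕ} (L : ℕ) (D : ℕ → Multiset (ZMod n)) (i : ZMod n) : ℕ → ZMod n
  | 0 => i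
  | t + 1 =>
    if brPath L D i t + 1 ∈ D (L - 1 - t) then brPath L D i t - 1 else brPath L D i t

/-- Reverse ringing transition `R̃(D, i) = (D'', 𝔟_0 + 1)`: in each row `j` with
`𝔟_j + 1 ∈ D_j`, one particle hops from site `𝔟_j + 1` to site `𝔟_j`. -/
def bR {n : ℕ} (L : ℕ) (D : ℕ → Multiset (ZMod n)) (i : ZMod n) :
    (ℕ → Multiset (ZMod n)) × ZMod n :=
  (fun j =>
    if j < L then
      (let b := brPath L D i (L - 1 - j);
       if b + 1 ∈ D j then b ::ₘ (D j).erase (b + 1) else D j)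
    else D j,
   brPath L D i L + 1)

/-- Total number of particles at site `s` (summed over all `L` rows). -/
def colCount {n : ℕ} (L : ℕ) (D : ℕ → Multiset (ZMod n)) (s : ZMod n) : ℕ :=
  ∑ t ∈ Finset.range L, (D t).count s

/-- Column `s` of `D` is empty: no row contains site `s`. -/
def colEmpty {n : ℕ} (L : ℕ) (D : ℕ → Multiset (ZMod n)) (s : ZMod n) : Prop :=
  ∀ t, t < L → s ∉ D t

open scoped Classical in
/-- Forward transition rate at site `j`: `1` if column `j` is empty, `x_j⁻¹` otherwise. -/
noncomputable def fwdRate {n : ℕ} (x : ZMod n → ℝ) (L : ℕ) (D : ℕ → Multiset (ZMod n))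
    (j : ZMod n) : ℝ :=
  if colEmpty L D j then 1 else (x j)⁻¹

/-- The weight `x^D = ∏_s x_s^{m_s(D)}`. -/
noncomputable def wt {n : ℕ} [NeZero n] (x : ZMod n → ℝ) (L : ℕ)
    (D : ℕ → Multiset (ZMod n)) : ℝ :=
  ∏ s : ZMod n, x s ^ colCount L D s

section aux
open Finset

variable {n : ℕ}

private lemma prod_map_eq [NeZero n] (x : ZMod n → ℝ) (m : Multiset (ZMod n)) :
    (m.map x).prod = ∏ s : ZMod n, x s ^ m.count s := by
  induction m using Multiset.induction_on with
  | empty => simp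
  | cons a m ih =>
    simp only [Multiset.map_cons, Multiset.prod_cons, ih, Multiset.count_cons, pow_add]
    rw [Finset.prod_mul_distrib]
    have h1 : ∀ s : ZMod n, x s ^ (if s = a then 1 else 0) = if s = a then x s else 1 := by
      intro s; split <;> simp
    rw [mul_comm]
    congr 1
    simp_rw [h1]
    simp [Finset.prod_ite_eq']

private lemma wt_eq_prod [NeZero n] (x : ZMod n → ℝ) (L : ℕ) (D : ℕ → Multiset (ZMod n)) :
    wt x L D = ∏ t ∈ range L, ((D t).map x).prod := by
  unfold wt colCount
  simp_rw [← Finset.prod_pow_eq_pow_sum]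
  rw [Finset.prod_comm]
  exact Finset.prod_congr rfl fun t _ => (prod_map_eq x (D t)).symm

private lemma telescope (g : ℕ → ℝ) (hg : ∀ u, g u ≠ 0) (m : ℕ) :
    ∏ u ∈ range m, (g (u + 1) / g u) = g m / g 0 := by
  induction m with
  | zero => simp [div_self (hg 0)]
  | succ m ih =>
    rw [Finset.prod_range_succ, ih, div_mul_div_comm, mul_comm (g m)]
    rw [mul_div_mul_right _ _ (hg m)]

private lemma brPath_succ (L : ℕ) (D : ℕ → Multiset (ZMod n)) (i : ZMod n) (t : ℕ) :
    brPath L D i (t + 1) =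
      if brPath L D i t + 1 ∈ D (L - 1 - t) then brPath L D i t - 1 else brPath L D i t := rfl

/-- weight ratio along a reverse transition -/
private lemma wt_bR [NeZero n] (x : ZMod n → ℝ) (hx : ∀ s, 0 < x s) (L : ℕ)
    (D : ℕ → Multiset (ZMod n)) (j : ZMod n) :
    wt x L (bR L D j).1 = wt x L D * (x (brPath L D j L + 1) / x (j + 1)) := by
  have hx0 : ∀ s, x s ≠ 0 := fun s => (hx s).ne'
  set b := brPath L D j with hb
  set g : ℕ → ℝ := fun u => x (b u + 1) with hg
  have hg0 : ∀ u, g u ≠ 0 := fun u => hx0 _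
  have hrow : ∀ t ∈ range L,
      (((bR L D j).1 t).map x).prod = ((D t).map x).prod * (g (L - t) / g (L - 1 - t)) := by
    intro t ht
    have htL : t < L := mem_range.mp ht
    have h1 : L - 1 - (L - 1 - t) = t := by omega
    have h2 : L - t = (L - 1 - t) + 1 := by omega
    have hstep : b (L - t) = if b (L - 1 - t) + 1 ∈ D t then b (L - 1 - t) - 1
        else b (L - 1 - t) := by
      rw [h2, hb, brPath_succ, h1]
    simp only [bR, if_pos htL]
    by_cases hm : b (L - 1 - t) + 1 ∈ D t
    · rw [if_pos hm]
      have hD : ((D t).map x).prod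
          = x (b (L - 1 - t) + 1) * (((D t).erase (b (L - 1 - t) + 1)).map x).prod := by
        conv_lhs => rw [← Multiset.cons_erase hm]
        simp
      rw [Multiset.map_cons, Multiset.prod_cons, hD]
      have hgLt : g (L - t) = x (b (L - 1 - t)) := by
        rw [hg]; simp only; rw [hstep, if_pos hm, sub_add_cancel]
      rw [hgLt]
      have hgl : g (L - 1 - t) = x (b (L - 1 - t) + 1) := rfl
      rw [hgl]
      set A := x (b (L - 1 - t) + 1) with hA
      set C := x (b (L - 1 - t)) with hC
      set E := (Multiset.map x ((D t).erase (b (L - 1 - t) + 1))).prod with hE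
      have hA0 : A ≠ 0 := hx0 _
      rw [mul_comm A E, mul_assoc, mul_div_assoc', mul_div_cancel_left₀ _ hA0, mul_comm]
    · rw [if_neg hm]
      have hgLt : g (L - t) = g (L - 1 - t) := by
        rw [hg]; simp only; rw [hstep, if_neg hm]
      rw [hgLt, div_self (hg0 _), mul_one]
  rw [wt_eq_prod, wt_eq_prod, Finset.prod_congr rfl hrow, Finset.prod_mul_distrib]
  congr 1
  have hrefl : ∀ t ∈ range L, g (L - t) / g (L - 1 - t)
      = g ((L - 1 - t) + 1) / g (L - 1 - t) := by
    intro t ht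
    have htL : t < L := mem_range.mp ht
    have : L - t = (L - 1 - t) + 1 := by omega
    rw [this]
  rw [Finset.prod_congr rfl hrefl]
  have hR := Finset.prod_range_reflect (fun u => g (u + 1) / g u) L
  rw [hR, telescope g hg0]
  rfl

private lemma brPath_const_of_empty [NeZero n] {L : ℕ} {D : ℕ → Multiset (ZMod n)} {j : ZMod n}
    (h : colEmpty L D (j + 1)) : ∀ t, t ≤ L → brPath L D j t = j := by
  intro t
  induction t with
  | zero => intro _; rfl
  | succ t ih =>
    intro ht
    rw [brPath_succ, ih (by omega), if_neg (h _ (by omega))]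

private lemma exists_move [NeZero n] {L : ℕ} {D : ℕ → Multiset (ZMod n)} {j : ZMod n}
    (h : ¬ colEmpty L D (j + 1)) :
    ∃ t, t < L ∧ brPath L D j t + 1 ∈ D (L - 1 - t) := by
  by_contra hc
  push_neg at hc
  have hconst : ∀ t, t ≤ L → brPath L D j t = j := by
    intro t
    induction t with
    | zero => intro _; rfl
    | succ t ih =>
      intro ht
      rw [brPath_succ, ih (by omega), if_neg]
      intro hmem
      exact hc t (by omega) (by rwa [ih (by omega)])
  apply h
  intro r hr hmem
  have h1 : L - 1 - r < L := by omega
  have h2 : L - 1 - (L - 1 - r) = r := by omega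
  exact hc (L - 1 - r) h1 (by rw [hconst _ (by omega), h2]; exact hmem)

end aux

section main
open Finset

variable {n : ℕ}

/-- the key termwise identity: each incoming term equals `wt D * fwdRate D (j+1)` -/
private lemma key_term [NeZero n] (L : ℕ) (D : ℕ → Multiset (ZMod n)) (x : ZMod n → ℝ)
    (hx : ∀ s, 0 < x s) (j : ZMod n) :
    wt x L (bR L D j).1 * fwdRate x L (bR L D j).1 (bR L D j).2
      = wt x L D * fwdRate x L D (j + 1) := by
  classical
  have hx0 : ∀ s, x s ≠ 0 := fun s => (hx s).ne'
  by_cases hE : colEmpty L D (j + 1)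
  · -- empty column: the reverse transition does nothing
    have hconst := brPath_const_of_empty (L := L) (D := D) (j := j) hE
    have hC : (bR L D j).1 = D := by
      funext t
      simp only [bR]
      by_cases htL : t < L
      · rw [if_pos htL]
        have hbt : brPath L D j (L - 1 - t) = j := hconst _ (by omega)
        simp only [hbt]
        rw [if_neg (hE t htL)]
      · rw [if_neg htL]
    have hi : (bR L D j).2 = j + 1 := by
      show brPath L D j L + 1 = j + 1
      rw [hconst L le_rfl]
    rw [hC, hi]
  · -- nonempty column: there is a move, the last move leaves a particle at site `i'`
    obtain ⟨t1, ht1L, ht1m⟩ := exists_move hE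
    set S : Finset ℕ := (range L).filter (fun t => brPath L D j t + 1 ∈ D (L - 1 - t)) with hS
    have hSne : S.Nonempty := ⟨t1, by simp [hS, ht1L, ht1m]⟩
    set t0 := S.max' hSne with ht0
    have ht0S : t0 ∈ S := S.max'_mem hSne
    have ht0L : t0 < L := by
      have := (Finset.mem_filter.mp ht0S).1; exact mem_range.mp this
    have ht0m : brPath L D j t0 + 1 ∈ D (L - 1 - t0) := (Finset.mem_filter.mp ht0S).2
    have htail : ∀ d, t0 + 1 + d ≤ L → brPath L D j (t0 + 1 + d) = brPath L D j (t0 + 1) := by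
      intro d
      induction d with
      | zero => intro _; rfl
      | succ d ih =>
        intro hd
        have h1 : t0 + 1 + (d + 1) = (t0 + 1 + d) + 1 := by omega
        rw [h1, brPath_succ, if_neg, ih (by omega)]
        intro hmem
        have : t0 + 1 + d ∈ S := by
          refine Finset.mem_filter.mpr ⟨mem_range.mpr (by omega), hmem⟩
        have := S.le_max' _ this
        omega
    have hbL : brPath L D j L = brPath L D j (t0 + 1) := by
      have h1 := htail (L - t0 - 1) (by omega)
      rwa [show t0 + 1 + (L - t0 - 1) = L from by omega] at h1
    have hstep : brPath L D j (t0 + 1) = brPath L D j t0 - 1 := by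
      rw [brPath_succ, if_pos ht0m]
    have hi' : (bR L D j).2 = brPath L D j t0 := by
      show brPath L D j L + 1 = _
      rw [hbL, hstep, sub_add_cancel]
    -- column i' of C is nonempty: row L-1-t0 contains brPath t0
    have hne : ¬ colEmpty L (bR L D j).1 (bR L D j).2 := by
      intro hc
      have hr0 : L - 1 - t0 < L := by omega
      apply hc (L - 1 - t0) hr0
      have h2 : L - 1 - (L - 1 - t0) = t0 := by omega
      show (bR L D j).2 ∈ (bR L D j).1 (L - 1 - t0)
      simp only [bR, if_pos hr0, h2]
      rw [if_pos ht0m]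
      have h3 : brPath L D j L + 1 = brPath L D j t0 := by
        rw [hbL, hstep, sub_add_cancel]
      rw [h3]
      exact Multiset.mem_cons_self _ _
    rw [wt_bR x hx L D j]
    have hfC : fwdRate x L (bR L D j).1 (bR L D j).2 = (x ((bR L D j).2))⁻¹ := by
      unfold fwdRate; rw [if_neg hne]
    have hfD : fwdRate x L D (j + 1) = (x (j + 1))⁻¹ := by
      unfold fwdRate; rw [if_neg hE]
    rw [hfC, hfD]
    have hi2 : (bR L D j).2 = brPath L D j L + 1 := rfl
    rw [← hi2]
    field_simp
    rw [← div_div, mul_div_cancel_right₀ _ (hx0 _)]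
end main

/-- the Markov chain on bosonic multiline queues defined by forward ringing
paths satisfies the global balance condition with unnormalized stationary measure
`Wt(D) = x^D`: the total outgoing rate from `D` weighted by `Wt(D)` equals the total
weighted incoming rate, where the incoming transitions are the forward transitions from
the reverse-transition states `R̃_j(D)` (each triggered at site `(R̃(D,j)).2`). -/
theorem bosonic_global_balance (n L : ℕ) [NeZero n] (D : ℕ → Multiset (ZMod n))
    (x : ZMod n → ℝ) (hx : ∀ s, 0 < x s) :
    wt x L D * ∑ j : ZMod n, fwdRate x L D j
      = ∑ j : ZMod n, wt x L (bR L D j).1 * fwdRate x L (bR L D j).1 (bR L D j).2 := by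
  rw [Finset.mul_sum]
  exact (Fintype.sum_equiv (Equiv.addRight (1 : ZMod n))
    (fun j => wt x L (bR L D j).1 * fwdRate x L (bR L D j).1 (bR L D j).2)
    (fun j => wt x L D * fwdRate x L D j)
    (fun j => key_term L D x hx j)).symm
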